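/- arXiv:1210.6126 — 5 statements merged into one kernel-verified Lean document; each statement's English description precedes it below -/
import Mathlib

section
/- Let (c_n) and (d_n) be sequences of real numbers with d_n > 0 for all n, and suppose c_n/d_n is strictly decreasing in n. If f(x) = Σ c_n x^n and g(x) = Σ d_n x^n both converge for |x| < r (r > 0), then the function h(x) = f(x)/g(x) is strictly decreasing on (0, r). -/
set_option maxHeartbeats 1000000


theorem stmt_5 (c d : ℕ → ℝ) (r : ℝ) (hr : 0 < r)
    (hd : ∀ n, 0 < d n)
    (hmono : StrictAnti (fun n => c n / d n))
    (hf : ∀ x : ℝ, |x| < r → Summable (fun n => c n * x ^ n))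
    (hg : ∀ x : ℝ, |x| < r → Summable (fun n => d n * x ^ n)) :
    StrictAntiOn (fun x => (∑' n : ℕ, c n * x ^ n) / (∑' n : ℕ, d n * x ^ n))
      (Set.Ioo 0 r) := by
  intro x hx y hy hxy
  obtain ⟨hx0, hxr⟩ := hx
  obtain ⟨hy0, hyr⟩ := hy
  have hax : |x| < r := by rwa [abs_of_pos hx0]
  have hay : |y| < r := by rwa [abs_of_pos hy0]
  have Sfx := hf x hax; have Sfy := hf y hay
  have Sgx := hg x hax; have Sgy := hg y hay
  have hgx : 0 < ∑' n, d n * x ^ n :=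
    Summable.tsum_pos Sgx (fun n => mul_nonneg (hd n).le (pow_nonneg hx0.le n)) 0 (by simpa using hd 0)
  have hgy : 0 < ∑' n, d n * y ^ n :=
    Summable.tsum_pos Sgy (fun n => mul_nonneg (hd n).le (pow_nonneg hy0.le n)) 0 (by simpa using hd 0)
  simp only
  rw [div_lt_div_iff₀ hgy hgx]
  -- summability of products
  have nfx : Summable fun n => ‖c n * x ^ n‖ := summable_norm_iff.mpr Sfx
  have nfy : Summable fun n => ‖c n * y ^ n‖ := summable_norm_iff.mpr Sfy
  have ngx : Summable fun n => ‖d n * x ^ n‖ := summable_norm_iff.mpr Sgx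
  have ngy : Summable fun n => ‖d n * y ^ n‖ := summable_norm_iff.mpr Sgy
  have SB1 : Summable fun p : ℕ × ℕ => (c p.1 * x ^ p.1) * (d p.2 * y ^ p.2) :=
    summable_mul_of_summable_norm nfx ngy
  have SB2 : Summable fun p : ℕ × ℕ => (c p.1 * y ^ p.1) * (d p.2 * x ^ p.2) :=
    summable_mul_of_summable_norm nfy ngx
  have e1 : (∑' n, c n * x ^ n) * (∑' n, d n * y ^ n)
      = ∑' p : ℕ × ℕ, (c p.1 * x ^ p.1) * (d p.2 * y ^ p.2) :=
    tsum_mul_tsum_of_summable_norm nfx ngy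
  have e2 : (∑' n, c n * y ^ n) * (∑' n, d n * x ^ n)
      = ∑' p : ℕ × ℕ, (c p.1 * y ^ p.1) * (d p.2 * x ^ p.2) :=
    tsum_mul_tsum_of_summable_norm nfy ngx
  rw [e1, e2, ← sub_pos, ← Summable.tsum_sub SB1 SB2]
  set B : ℕ × ℕ → ℝ := fun p =>
    (c p.1 * x ^ p.1) * (d p.2 * y ^ p.2) - (c p.1 * y ^ p.1) * (d p.2 * x ^ p.2) with hB
  have SB : Summable B := SB1.sub SB2
  have SBs : Summable fun p : ℕ × ℕ => B (p.2, p.1) := by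
    have := (Equiv.prodComm ℕ ℕ).summable_iff.mpr SB
    exact this
  have hswap : ∑' p : ℕ × ℕ, B (p.2, p.1) = ∑' p : ℕ × ℕ, B p := by
    have := (Equiv.prodComm ℕ ℕ).tsum_eq B
    simpa [Prod.swap] using this
  have key : ∀ m n : ℕ, m < n →
      0 < (c m * d n - c n * d m) * (x ^ m * y ^ n - x ^ n * y ^ m) := by
    intro m n hmn
    have hc : c n / d n < c m / d m := hmono hmn
    have hcd : c n * d m < c m * d n := by
      rwa [div_lt_div_iff₀ (hd n) (hd m)] at hc
    obtain ⟨k, rfl⟩ : ∃ k, n = m + (k + 1) := ⟨n - m - 1, by omega⟩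
    have hpow : x ^ (k + 1) < y ^ (k + 1) :=
      pow_lt_pow_left₀ hxy hx0.le (Nat.succ_ne_zero k)
    have hxy' : x ^ (m + (k + 1)) * y ^ m < x ^ m * y ^ (m + (k + 1)) := by
      have h' : x ^ m * y ^ m * x ^ (k + 1) < x ^ m * y ^ m * y ^ (k + 1) :=
        mul_lt_mul_of_pos_left hpow (mul_pos (pow_pos hx0 m) (pow_pos hy0 m))
      calc x ^ (m + (k + 1)) * y ^ m = x ^ m * y ^ m * x ^ (k + 1) := by ring
        _ < x ^ m * y ^ m * y ^ (k + 1) := h'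
        _ = x ^ m * y ^ (m + (k + 1)) := by ring
    exact mul_pos (sub_pos.mpr hcd) (sub_pos.mpr hxy')
  have hA : ∀ p : ℕ × ℕ, B p + B (p.2, p.1)
      = (c p.1 * d p.2 - c p.2 * d p.1) * (x ^ p.1 * y ^ p.2 - x ^ p.2 * y ^ p.1) := by
    intro p; simp only [hB]; ring
  have hAnn : ∀ p : ℕ × ℕ, 0 ≤ B p + B (p.2, p.1) := by
    intro p
    rw [hA p]
    rcases lt_trichotomy p.1 p.2 with h | h | h
    · exact (key p.1 p.2 h).le
    · rw [h]; ring_nf; simp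
    · have := key p.2 p.1 h
      nlinarith [this]
  have hApos : 0 < B (0, 1) + B ((0, 1).2, (0, 1).1) := by
    rw [hA (0, 1)]
    exact key 0 1 one_pos
  have h2 : 0 < ∑' p : ℕ × ℕ, (B p + B (p.2, p.1)) :=
    Summable.tsum_pos (SB.add SBs) hAnn (0, 1) hApos
  rw [Summable.tsum_add SB SBs, hswap] at h2
  linarith
end

section
/- Let (c_n), (d_n) be real sequences with d_n > 0, and suppose there is n_0 such that c_n/d_n is strictly increasing for n ≤ n_0 and strictly decreasing for n > n_0. If f(x)=Σ c_n x^n and g(x)=Σ d_n x^n have radius of convergence r > 0, then there exists x_0 ∈ (0,r) such that h = f/g is strictly increasing on (0,x_0) and strictly decreasing on (x_0,r), OR h is monotone on all of (0,r). -/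
open Finset

/-- Per-term inequality for the one-sign-change comparison. -/
private lemma term_le {u v b : ℝ} (hu : 0 < u) (huv : u < v) {n P : ℕ}
    (hneg : n < P → b ≤ 0) (hpos : P ≤ n → 0 ≤ b) :
    v ^ P * (b * u ^ n) ≤ u ^ P * (b * v ^ n) := by
  have hv : 0 < v := hu.trans huv
  rcases lt_or_ge n P with h | h
  · obtain ⟨k, rfl⟩ : ∃ k, P = n + k := ⟨P - n, by omega⟩
    have hbn := hneg h
    have hk : u ^ k ≤ v ^ k := pow_le_pow_left₀ hu.le huv.le k
    have hun : (0:ℝ) ≤ u ^ n * v ^ n := by positivity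
    calc v ^ (n+k) * (b * u ^ n) = b * ((u^n * v^n) * v^k) := by rw [pow_add]; ring
      _ ≤ b * ((u^n * v^n) * u^k) :=
          mul_le_mul_of_nonpos_left (mul_le_mul_of_nonneg_left hk hun) hbn
      _ = u ^ (n+k) * (b * v ^ n) := by rw [pow_add]; ring
  · obtain ⟨k, rfl⟩ : ∃ k, n = P + k := ⟨n - P, by omega⟩
    have hbn := hpos h
    have hk : u ^ k ≤ v ^ k := pow_le_pow_left₀ hu.le huv.le k
    have hPv : (0:ℝ) ≤ u ^ P * v ^ P := by positivity
    calc v ^ P * (b * u ^ (P+k)) = b * ((u^P * v^P) * u^k) := by rw [pow_add]; ring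
      _ ≤ b * ((u^P * v^P) * v^k) :=
          mul_le_mul_of_nonneg_left (mul_le_mul_of_nonneg_left hk hPv) hbn
      _ = u ^ P * (b * v ^ (P+k)) := by rw [pow_add]; ring

private lemma term_lt {u v b : ℝ} (hu : 0 < u) (huv : u < v) {n P : ℕ}
    (hneg : n < P → b ≤ 0) (hpos : P ≤ n → 0 ≤ b) (hbne : b ≠ 0) (hnP : n ≠ P) :
    v ^ P * (b * u ^ n) < u ^ P * (b * v ^ n) := by
  have hv : 0 < v := hu.trans huv
  rcases lt_or_ge n P with h | h
  · obtain ⟨k, rfl⟩ : ∃ k, P = n + k := ⟨P - n, by omega⟩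
    have hbn : b < 0 := lt_of_le_of_ne (hneg h) hbne
    have hkne : k ≠ 0 := by omega
    have hk : u ^ k < v ^ k := pow_lt_pow_left₀ huv hu.le hkne
    have hun : (0:ℝ) < u ^ n * v ^ n := by positivity
    calc v ^ (n+k) * (b * u ^ n) = b * ((u^n * v^n) * v^k) := by rw [pow_add]; ring
      _ < b * ((u^n * v^n) * u^k) :=
          mul_lt_mul_of_neg_left (mul_lt_mul_of_pos_left hk hun) hbn
      _ = u ^ (n+k) * (b * v ^ n) := by rw [pow_add]; ring
  · obtain ⟨k, rfl⟩ : ∃ k, n = P + k := ⟨n - P, by omega⟩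
    have hbn : 0 < b := lt_of_le_of_ne (hpos h) (Ne.symm hbne)
    have hkne : k ≠ 0 := by omega
    have hk : u ^ k < v ^ k := pow_lt_pow_left₀ huv hu.le hkne
    have hPv : (0:ℝ) < u ^ P * v ^ P := by positivity
    calc v ^ P * (b * u ^ (P+k)) = b * ((u^P * v^P) * u^k) := by rw [pow_add]; ring
      _ < b * ((u^P * v^P) * v^k) :=
          mul_lt_mul_of_pos_left (mul_lt_mul_of_pos_left hk hPv) hbn
      _ = u ^ P * (b * v ^ (P+k)) := by rw [pow_add]; ring

/-- Strict one-sign-change comparison lemma. -/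
private lemma one_strict (S : ℕ → ℝ) (P : ℕ)
    (hneg : ∀ n, n < P → S n ≤ 0) (hpos : ∀ n, P ≤ n → 0 ≤ S n)
    {u v : ℝ} (hu : 0 < u) (huv : u < v)
    (hsu : Summable fun n => S n * u ^ n) (hsv : Summable fun n => S n * v ^ n)
    {n' : ℕ} (hn'P : n' ≠ P) (hn' : S n' ≠ 0) :
    v ^ P * ∑' n, S n * u ^ n < u ^ P * ∑' n, S n * v ^ n := by
  rw [← tsum_mul_left, ← tsum_mul_left]
  exact Summable.tsum_lt_tsum (fun n => term_le hu huv (hneg n) (hpos n))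
    (term_lt hu huv (hneg n') (hpos n') hn' hn'P) (hsu.mul_left _) (hsv.mul_left _)
set_option maxHeartbeats 2000000 in

section
variable {c d : ℕ → ℝ} {r : ℝ}

private lemma ratio_key (c d : ℕ → ℝ) (r : ℝ) (hd : ∀ n, 0 < d n) (n₀ : ℕ)
    (hinc : ∀ m n : ℕ, m < n → n ≤ n₀ → c m / d m < c n / d n)
    (hdec : ∀ m n : ℕ, n₀ < m → m < n → c n / d n < c m / d m)
    (hf : ∀ x : ℝ, |x| < r → Summable (fun n => c n * x ^ n))
    (hg : ∀ x : ℝ, |x| < r → Summable (fun n => d n * x ^ n))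
    {x y z : ℝ} (hx : 0 < x) (hxy : x < y) (hyz : y < z) (hzr : z < r)
    (hyx : (∑' n : ℕ, c n * y ^ n) / (∑' n : ℕ, d n * y ^ n) ≤
      (∑' n : ℕ, c n * x ^ n) / (∑' n : ℕ, d n * x ^ n)) :
    (∑' n : ℕ, c n * z ^ n) / (∑' n : ℕ, d n * z ^ n) <
      (∑' n : ℕ, c n * y ^ n) / (∑' n : ℕ, d n * y ^ n) := by
  classical
  have hy0 : 0 < y := hx.trans hxy
  have hz0 : 0 < z := hy0.trans hyz
  have hyr : y < r := hyz.trans hzr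
  have hxr : x < r := hxy.trans hyr
  have hxabs : |x| < r := by rw [abs_of_pos hx]; exact hxr
  have hyabs : |y| < r := by rw [abs_of_pos hy0]; exact hyr
  have hzabs : |z| < r := by rw [abs_of_pos hz0]; exact hzr
  have gpos : ∀ w : ℝ, 0 < w → w < r → 0 < ∑' n, d n * w ^ n := by
    intro w hw0 hwr
    refine Summable.tsum_pos (hg w (by rw [abs_of_pos hw0]; exact hwr))
      (fun n => mul_nonneg (hd n).le (pow_nonneg hw0.le n)) 0 ?_
    simpa using hd 0
  set t : ℝ := (∑' n : ℕ, c n * y ^ n) / (∑' n : ℕ, d n * y ^ n) with ht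
  set e : ℕ → ℝ := fun n => c n - t * d n with he
  have hesum : ∀ w : ℝ, |w| < r → Summable fun n => e n * w ^ n := by
    intro w hw
    exact ((hf w hw).sub ((hg w hw).mul_left t)).congr fun n => by simp [he]; ring
  have heabs : ∀ w : ℝ, 0 ≤ w → w < r → Summable fun n => |e n| * w ^ n := by
    intro w hw0 hwr
    have h1 : Summable fun n => |e n * w ^ n| :=
      summable_abs_iff.mpr (hesum w (by rwa [abs_of_nonneg hw0]))
    exact h1.congr fun n => by rw [abs_mul, abs_of_nonneg (pow_nonneg hw0 n)]
  have hphi : ∀ w : ℝ, |w| < r →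
      (∑' n, e n * w ^ n) = (∑' n, c n * w ^ n) - t * ∑' n, d n * w ^ n := by
    intro w hw
    calc ∑' n, e n * w ^ n = ∑' n, (c n * w ^ n - t * (d n * w ^ n)) :=
          tsum_congr fun n => by simp [he]; ring
      _ = (∑' n, c n * w ^ n) - ∑' n, t * (d n * w ^ n) :=
          Summable.tsum_sub (hf w hw) ((hg w hw).mul_left t)
      _ = _ := by rw [tsum_mul_left]
  have hgy : 0 < ∑' n, d n * y ^ n := gpos y hy0 hyr
  have hphiy : (∑' n, e n * y ^ n) = 0 := by
    rw [hphi y hyabs]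
    have h1 : t * ∑' n, d n * y ^ n = ∑' n, c n * y ^ n := div_mul_cancel₀ _ hgy.ne'
    linarith
  set S : ℕ → ℝ := fun n => ∑ k ∈ Finset.range (n+1), e k * y ^ k with hSdef
  have htail : ∀ n, S n = -∑' k, e (k+(n+1)) * y ^ (k+(n+1)) := by
    intro n
    have h1 := Summable.sum_add_tsum_nat_add (f := fun k => e k * y ^ k) (n+1) (hesum y hyabs)
    rw [hphiy] at h1
    have h2 : S n = ∑ i ∈ range (n+1), e i * y ^ i := rfl
    linarith [h1, h2]
  have he_pos_iff : ∀ k, 0 < e k ↔ t < c k / d k := by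
    intro k
    rw [lt_div_iff₀ (hd k)]
    constructor <;> intro h1 <;> [skip; skip] <;> simp [he] at * <;> linarith
  -- no "+ then -" pattern in S
  have hNOPM : ∀ n₁ n₂, n₁ < n₂ → 0 < S n₁ → S n₂ < 0 → False := by
    intro n₁ n₂ hlt h1 h2
    have hk : ∃ k ≤ n₁, 0 < e k := by
      by_contra hc; push_neg at hc
      have h3 : S n₁ ≤ 0 := by
        apply Finset.sum_nonpos
        intro k hk
        have hek : e k ≤ 0 := hc k (by simp at hk; omega)
        have := mul_le_mul_of_nonneg_right hek (pow_nonneg hy0.le k)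
        simpa using this
      linarith
    obtain ⟨k, hkle, hek⟩ := hk
    have hj : ∃ j, n₂ < j ∧ 0 < e j := by
      by_contra hc; push_neg at hc
      have h3 : (∑' k, e (k+(n₂+1)) * y ^ (k+(n₂+1))) ≤ 0 := by
        apply tsum_nonpos
        intro m
        have hem : e (m+(n₂+1)) ≤ 0 := hc _ (by omega)
        have := mul_le_mul_of_nonneg_right hem (pow_nonneg hy0.le (m+(n₂+1)))
        simpa using this
      rw [htail n₂] at h2
      linarith
    obtain ⟨j, hjgt, hej⟩ := hj
    have hmid : ∀ m, n₁ < m → m ≤ n₂ → 0 < e m := by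
      intro m hm1 hm2
      rcases le_or_gt m n₀ with hcase | hcase
      · have h4 : c k / d k < c m / d m := hinc k m (by omega) hcase
        rw [he_pos_iff] at hek ⊢; linarith
      · have h4 : c j / d j < c m / d m := hdec m j hcase (by omega)
        rw [he_pos_iff] at hej ⊢; linarith
    have hstep : ∀ i, n₁ + i ≤ n₂ → 0 < S (n₁ + i) := by
      intro i
      induction i with
      | zero => intro _; simpa using h1
      | succ i ih =>
        intro hle
        have h0 : 0 < S (n₁ + i) := ih (by omega)
        have he' : 0 < e (n₁ + i + 1) := hmid _ (by omega) (by omega)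
        have hS1 : S (n₁ + i + 1) = S (n₁ + i) + e (n₁+i+1) * y^(n₁+i+1) :=
          Finset.sum_range_succ _ _
        have h5 : 0 < e (n₁+i+1) * y^(n₁+i+1) := mul_pos he' (pow_pos hy0 _)
        rw [show n₁ + (i+1) = n₁ + i + 1 by omega, hS1]
        linarith
    have := hstep (n₂ - n₁) (by omega)
    rw [show n₁ + (n₂ - n₁) = n₂ by omega] at this
    linarith
  -- summability of the Ψ series
  have hψsum : ∀ w : ℝ, 0 < w → w < r → Summable fun n => S n * (w/y) ^ n := by
    intro w hw0 hwr
    have hmax : max w y < r := max_lt hwr hyr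
    set t' : ℝ := (max w y + r)/2 with ht'
    have hwt' : w < t' := by
      have := le_max_left w y; simp only [ht']; linarith
    have hyt' : y < t' := by
      have := le_max_right w y; simp only [ht']; linarith
    have ht'r : t' < r := by simp only [ht']; linarith
    have ht'0 : 0 < t' := lt_trans hw0 hwt'
    have hCsum : Summable fun k => |e k| * t'^k := heabs t' ht'0.le ht'r
    set C : ℝ := ∑' k, |e k| * t'^k with hC
    have hC0 : 0 ≤ C := tsum_nonneg fun k => mul_nonneg (abs_nonneg _) (pow_nonneg ht'0.le k)
    have hyt1 : y / t' ≤ 1 := by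
      rw [div_le_one ht'0]; exact hyt'.le
    have hyt0 : 0 ≤ y / t' := div_nonneg hy0.le ht'0.le
    have hSb : ∀ n, |S n| ≤ C * (y/t')^(n+1) := by
      intro n
      rw [htail n, abs_neg]
      have habs1 : Summable fun k => |e (k+(n+1))| * y ^ (k+(n+1)) :=
        (summable_nat_add_iff (n+1)).mpr (heabs y hy0.le hyr)
      have habs2 : Summable fun k => |e (k+(n+1))| * t' ^ (k+(n+1)) :=
        (summable_nat_add_iff (n+1)).mpr hCsum
      have h1 : |∑' k, e (k+(n+1)) * y^(k+(n+1))| ≤ ∑' k, |e (k+(n+1))| * y^(k+(n+1)) := by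
        have h2 := norm_tsum_le_tsum_norm (f := fun k => e (k+(n+1)) * y^(k+(n+1)))
          (by simpa [Real.norm_eq_abs, abs_mul, abs_pow, abs_of_pos hy0] using habs1)
        simpa [Real.norm_eq_abs, abs_mul, abs_pow, abs_of_pos hy0] using h2
      refine h1.trans ?_
      have hterm : ∀ k, |e (k+(n+1))| * y^(k+(n+1)) ≤
          (y/t')^(n+1) * (|e (k+(n+1))| * t'^(k+(n+1))) := by
        intro k
        have hyj : y^(k+(n+1)) = t'^(k+(n+1)) * (y/t')^(k+(n+1)) := by
          rw [← mul_pow, mul_div_cancel₀ _ ht'0.ne']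
        have hle : (y/t')^(k+(n+1)) ≤ (y/t')^(n+1) :=
          pow_le_pow_of_le_one hyt0 hyt1 (by omega)
        calc |e (k+(n+1))| * y^(k+(n+1))
            = (|e (k+(n+1))| * t'^(k+(n+1))) * (y/t')^(k+(n+1)) := by rw [hyj]; ring
          _ ≤ (|e (k+(n+1))| * t'^(k+(n+1))) * (y/t')^(n+1) := by
              apply mul_le_mul_of_nonneg_left hle
              exact mul_nonneg (abs_nonneg _) (pow_nonneg ht'0.le _)
          _ = (y/t')^(n+1) * (|e (k+(n+1))| * t'^(k+(n+1))) := by ring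
      calc (∑' k, |e (k+(n+1))| * y^(k+(n+1)))
          ≤ ∑' k, (y/t')^(n+1) * (|e (k+(n+1))| * t'^(k+(n+1))) :=
            Summable.tsum_le_tsum hterm habs1 (habs2.mul_left _)
        _ = (y/t')^(n+1) * ∑' k, |e (k+(n+1))| * t'^(k+(n+1)) := tsum_mul_left
        _ ≤ (y/t')^(n+1) * C := by
            apply mul_le_mul_of_nonneg_left _ (pow_nonneg hyt0 _)
            have h2 := Summable.sum_add_tsum_nat_add (f := fun k => |e k| * t'^k) (n+1) hCsum
            have h3 : 0 ≤ ∑ i ∈ range (n+1), |e i| * t'^i :=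
              Finset.sum_nonneg fun i _ => mul_nonneg (abs_nonneg _) (pow_nonneg ht'0.le i)
            linarith [h2]
        _ = C * (y/t')^(n+1) := mul_comm _ _
    apply Summable.of_norm_bounded (g := fun n => (C * (y/t')) * (w/t')^n)
    · exact Summable.mul_left _ (summable_geometric_of_lt_one
        (div_nonneg hw0.le ht'0.le) (by rw [div_lt_one ht'0]; exact hwt'))
    · intro n
      have hq : (0:ℝ) ≤ (w/y)^n := pow_nonneg (div_nonneg hw0.le hy0.le) n
      rw [Real.norm_eq_abs, abs_mul, abs_of_nonneg hq]
      calc |S n| * (w/y)^n ≤ (C * (y/t')^(n+1)) * (w/y)^n :=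
            mul_le_mul_of_nonneg_right (hSb n) hq
        _ = (C * (y/t')) * (((y/t')*(w/y))^n) := by rw [mul_pow, pow_succ]; ring
        _ = (C * (y/t')) * (w/t')^n := by
            have hmul : (y/t')*(w/y) = w/t' := by
              field_simp
            rw [hmul]
  -- factorization
  have hfac : ∀ w : ℝ, 0 < w → w < r →
      (∑' n, e n * w ^ n) = (1 - w / y) * ∑' n, S n * (w / y) ^ n := by
    intro w hw0 hwr
    have hF : Summable fun n => S n * (w/y)^n := hψsum w hw0 hwr
    set G : ℕ → ℝ := fun n => if n = 0 then 0 else S (n-1) * (w/y)^n with hGdef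
    have hG1 : ∀ n, G (n+1) = (S n * (w/y)^n) * (w/y) := by
      intro n
      simp only [hGdef, Nat.succ_ne_zero, if_false, Nat.add_sub_cancel]
      rw [pow_succ]; ring
    have hGsum : Summable G := by
      rw [← summable_nat_add_iff 1]
      exact (hF.mul_right (w/y)).congr fun n => (hG1 n).symm
    have hEFG : ∀ n, e n * w ^ n = S n * (w/y)^n - G n := by
      intro n
      cases n with
      | zero =>
        have hS0 : S 0 = e 0 := by simp [hSdef]
        simp [hGdef, hS0]
      | succ m =>
        have hstep : S (m+1) = S m + e (m+1) * y ^ (m+1) := Finset.sum_range_succ _ _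
        have hG' : G (m+1) = S m * (w/y)^(m+1) := by
          simp only [hGdef, Nat.succ_ne_zero, if_false, Nat.add_sub_cancel]
        rw [hG', hstep]
        have hyw : y ^ (m+1) * (w/y)^(m+1) = w^(m+1) := by
          rw [← mul_pow, mul_div_cancel₀ _ hy0.ne']
        linear_combination (-(e (m+1))) * hyw
    calc ∑' n, e n * w ^ n = ∑' n, (S n * (w/y)^n - G n) := tsum_congr hEFG
      _ = (∑' n, S n * (w/y)^n) - ∑' n, G n := Summable.tsum_sub hF hGsum
      _ = (∑' n, S n * (w/y)^n) - (w/y) * ∑' n, S n * (w/y)^n := by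
          congr 1
          rw [Summable.tsum_eq_zero_add hGsum]
          have hG0 : G 0 = 0 := by simp [hGdef]
          rw [hG0, zero_add]
          calc ∑' n, G (n+1) = ∑' n, (S n * (w/y)^n) * (w/y) := tsum_congr hG1
            _ = (∑' n, S n * (w/y)^n) * (w/y) := tsum_mul_right
            _ = (w/y) * ∑' n, S n * (w/y)^n := mul_comm _ _
      _ = (1 - w/y) * ∑' n, S n * (w/y)^n := by ring
  -- nontriviality
  have hent : ∃ n, e n ≠ 0 := by
    by_contra hc; push_neg at hc
    have hval : ∀ n, c n / d n = t := by
      intro n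
      have h1 := hc n
      rw [div_eq_iff (hd n).ne']
      simp [he] at h1; linarith
    have h2 := hdec (n₀+1) (n₀+2) (by omega) (by omega)
    rw [hval (n₀+1), hval (n₀+2)] at h2
    exact lt_irrefl _ h2
  have hSnt : ∃ n, S n ≠ 0 := by
    by_contra hc; push_neg at hc
    obtain ⟨n, hn⟩ := hent
    apply hn
    cases n with
    | zero =>
      have := hc 0
      simpa [hSdef] using this
    | succ m =>
      have h1 : S (m+1) = S m + e (m+1) * y ^ (m+1) := Finset.sum_range_succ _ _
      rw [hc m, hc (m+1)] at h1
      have h2 : e (m+1) * y ^ (m+1) = 0 := by linarith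
      rcases mul_eq_zero.mp h2 with h3 | h3
      · exact h3
      · exact absurd h3 (pow_ne_zero _ hy0.ne')
  -- positivity of Ψ at x implies positivity at z
  have hgx : 0 < ∑' n, d n * x ^ n := gpos x hx hxr
  have hφx : 0 ≤ ∑' n, e n * x ^ n := by
    rw [hphi x hxabs]
    have h1 : t * ∑' n, d n * x ^ n ≤ ∑' n, c n * x ^ n := (le_div_iff₀ hgx).mp hyx
    linarith
  have hsum_x : Summable fun n => S n * (x/y)^n := hψsum x hx hxr
  have hsum_z : Summable fun n => S n * (z/y)^n := hψsum z hz0 hzr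
  have hΨx : 0 ≤ ∑' n, S n * (x/y)^n := by
    by_contra hcon; push_neg at hcon
    have hfa : (1 - x/y) > 0 := by
      have : x/y < 1 := (div_lt_one hy0).mpr hxy
      linarith
    have := mul_neg_of_pos_of_neg hfa hcon
    rw [← hfac x hx hxr] at this
    linarith
  have hΨz : 0 < ∑' n, S n * (z/y)^n := by
    by_cases hexP : ∃ n, 0 < S n
    · set P := Nat.find hexP with hP
      have hSP : 0 < S P := Nat.find_spec hexP
      have hneg : ∀ n, n < P → S n ≤ 0 := fun n hn => le_of_not_gt (Nat.find_min hexP hn)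
      have hpos : ∀ n, P ≤ n → 0 ≤ S n := by
        intro n hn
        rcases eq_or_lt_of_le hn with h1 | h1
        · rw [← h1]; exact hSP.le
        · by_contra hcon; push_neg at hcon
          exact hNOPM P n h1 hSP hcon
      by_cases hnt2 : ∃ n, n ≠ P ∧ S n ≠ 0
      · obtain ⟨n', hn'1, hn'2⟩ := hnt2
        have hone := one_strict S P hneg hpos (div_pos hx hy0)
          ((div_lt_div_iff_of_pos_right hy0).mpr (hxy.trans hyz)) hsum_x hsum_z hn'1 hn'2
        have h0 : (0:ℝ) ≤ (z/y)^P * ∑' n, S n * (x/y)^n :=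
          mul_nonneg (pow_nonneg (div_nonneg hz0.le hy0.le) P) hΨx
        by_contra hcon; push_neg at hcon
        have : (x/y)^P * ∑' n, S n * (z/y)^n ≤ 0 :=
          mul_nonpos_iff.mpr (Or.inl ⟨(pow_nonneg (div_nonneg hx.le hy0.le) P), hcon⟩)
        linarith
      · push_neg at hnt2
        have hΨzeq : (∑' n, S n * (z/y)^n) = S P * (z/y)^P :=
          tsum_eq_single P fun n hn => by rw [hnt2 n hn]; ring
        rw [hΨzeq]
        exact mul_pos hSP (pow_pos (div_pos hz0 hy0) P)
    · push_neg at hexP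
      obtain ⟨n', hn'⟩ := hSnt
      have hSn' : S n' < 0 := lt_of_le_of_ne (hexP n') hn'
      have hnegx : (∑' n, S n * (x/y)^n) < 0 := by
        have h1 := Summable.tsum_lt_tsum (f := fun n => S n * (x/y)^n) (g := fun _ => (0:ℝ))
          (fun n => mul_nonpos_iff.mpr
            (Or.inr ⟨hexP n, pow_nonneg (div_nonneg hx.le hy0.le) n⟩))
          (mul_neg_of_neg_of_pos hSn' (pow_pos (div_pos hx hy0) n'))
          hsum_x summable_zero
        simpa using h1
      linarith
  -- conclude
  have hφz : (∑' n, e n * z ^ n) < 0 := by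
    rw [hfac z hz0 hzr]
    have hfa : (1 - z/y) < 0 := by
      have : (1:ℝ) < z/y := (one_lt_div hy0).mpr hyz
      linarith
    exact mul_neg_of_neg_of_pos hfa hΨz
  have hgz : 0 < ∑' n, d n * z ^ n := gpos z hz0 hzr
  rw [hphi z hzabs] at hφz
  rw [div_lt_iff₀ hgz]
  linarith

end
theorem stmt_6 (c d : ℕ → ℝ) (r : ℝ) (hr : 0 < r)
    (hd : ∀ n, 0 < d n)
    (n₀ : ℕ)
    (hinc : ∀ m n : ℕ, m < n → n ≤ n₀ → c m / d m < c n / d n)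
    (hdec : ∀ m n : ℕ, n₀ < m → m < n → c n / d n < c m / d m)
    (hf : ∀ x : ℝ, |x| < r → Summable (fun n => c n * x ^ n))
    (hg : ∀ x : ℝ, |x| < r → Summable (fun n => d n * x ^ n)) :
    (∃ x₀ ∈ Set.Ioo 0 r,
      StrictMonoOn (fun x => (∑' n : ℕ, c n * x ^ n) / (∑' n : ℕ, d n * x ^ n))
        (Set.Ioo 0 x₀) ∧
      StrictAntiOn (fun x => (∑' n : ℕ, c n * x ^ n) / (∑' n : ℕ, d n * x ^ n))
        (Set.Ioo x₀ r)) ∨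
    StrictMonoOn (fun x => (∑' n : ℕ, c n * x ^ n) / (∑' n : ℕ, d n * x ^ n))
      (Set.Ioo 0 r) ∨
    StrictAntiOn (fun x => (∑' n : ℕ, c n * x ^ n) / (∑' n : ℕ, d n * x ^ n))
      (Set.Ioo 0 r) := by
  classical
  set h : ℝ → ℝ := fun x => (∑' n : ℕ, c n * x ^ n) / (∑' n : ℕ, d n * x ^ n) with hh
  have key : ∀ x y z : ℝ, 0 < x → x < y → y < z → z < r → h y ≤ h x → h z < h y :=
    fun x y z h1 h2 h3 h4 h5 => ratio_key c d r hd n₀ hinc hdec hf hg h1 h2 h3 h4 h5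
  set A : Set ℝ := {x | x ∈ Set.Ioo 0 r ∧ ∃ w, 0 < w ∧ w < x ∧ h x ≤ h w} with hA
  have factI : ∀ x ∈ A, ∀ z, x < z → z < r → h z < h x := by
    rintro x ⟨⟨hx0, hxr⟩, w, hw0, hwx, hwh⟩ z hxz hzr
    exact key w x z hw0 hwx hxz hzr hwh
  have factA : ∀ x ∈ A, ∀ z, x < z → z < r → z ∈ A := by
    rintro x hxA z hxz hzr
    exact ⟨⟨lt_trans hxA.1.1 hxz, hzr⟩, x, hxA.1.1, hxz, (factI x hxA z hxz hzr).le⟩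
  by_cases hAe : A = ∅
  · refine Or.inr (Or.inl ?_)
    intro u hu v hv huv
    by_contra hc; push_neg at hc
    have hvA : v ∈ A := ⟨hv, u, hu.1, huv, hc⟩
    rw [hAe] at hvA
    exact hvA
  · have hAne : A.Nonempty := Set.nonempty_iff_ne_empty.mpr hAe
    have hAbdd : BddBelow A := ⟨0, fun a ha => (ha.1.1).le⟩
    set x₀ := sInf A with hx₀
    have hx₀r : x₀ < r := by
      obtain ⟨a, ha⟩ := hAne
      exact lt_of_le_of_lt (csInf_le hAbdd ha) ha.1.2
    have hx₀0 : 0 ≤ x₀ := le_csInf hAne fun a ha => ha.1.1.le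
    have hanti : ∀ u v : ℝ, x₀ < u → u < v → v < r → h v < h u := by
      intro u v hu huv hvr
      obtain ⟨a, haA, hau⟩ := exists_lt_of_csInf_lt hAne hu
      have huA : u ∈ A := factA a haA u hau (huv.trans hvr)
      exact factI u huA v huv hvr
    rcases eq_or_lt_of_le hx₀0 with heq | hpos
    · refine Or.inr (Or.inr ?_)
      intro u hu v hv huv
      exact hanti u v (heq ▸ hu.1) huv hv.2
    · left
      refine ⟨x₀, ⟨hpos, hx₀r⟩, ?_, ?_⟩
      · intro u hu v hv huv
        have hvA : v ∉ A := fun hvA => absurd (csInf_le hAbdd hvA) (not_le.mpr hv.2)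
        by_contra hc; push_neg at hc
        exact hvA ⟨⟨hv.1, lt_trans hv.2 hx₀r⟩, u, hu.1, huv, hc⟩
      · intro u hu v hv huv
        exact hanti u v hu.1 huv hv.2
end

section
/- Let a,b > 0 with ab ≥ 2/9 and ab - (2/9)(a+b) ≥ 0, (a,b) ∉ {(1/3,2/3),(2/3,1/3)}. Then the function r ↦ F(a,b;a+b;r) / F(1/3,2/3;1;r) is strictly increasing on (0,1). -/
open Filter


/-- The Gaussian hypergeometric function `F(a,b;c;x)` as a power series sum. -/
noncomputable def hyperF (a b c x : ℝ) : ℝ :=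
  ∑' n : ℕ, ((ascPochhammer ℝ n).eval a * (ascPochhammer ℝ n).eval b /
    ((ascPochhammer ℝ n).eval c * (Nat.factorial n : ℝ))) * x ^ n

namespace Stmt8Aux

/-- The coefficient of the hypergeometric series. -/
noncomputable def co (a b c : ℝ) (n : ℕ) : ℝ :=
  (ascPochhammer ℝ n).eval a * (ascPochhammer ℝ n).eval b /
    ((ascPochhammer ℝ n).eval c * (Nat.factorial n : ℝ))

lemma hyperF_eq (a b c x : ℝ) : hyperF a b c x = ∑' n : ℕ, co a b c n * x ^ n := rfl

lemma co_pos {a b c : ℝ} (ha : 0 < a) (hb : 0 < b) (hc : 0 < c) (n : ℕ) :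
    0 < co a b c n := by
  have h1 := ascPochhammer_pos n a ha
  have h2 := ascPochhammer_pos n b hb
  have h3 := ascPochhammer_pos n c hc
  have h4 : (0:ℝ) < (Nat.factorial n : ℝ) := by positivity
  exact div_pos (mul_pos h1 h2) (mul_pos h3 h4)

lemma co_succ {a b c : ℝ} (ha : 0 < a) (hb : 0 < b) (hc : 0 < c) (n : ℕ) :
    co a b c (n + 1) = co a b c n * ((a + n) * (b + n) / ((c + n) * (n + 1))) := by
  have h1 := (ascPochhammer_pos n a ha).ne'
  have h2 := (ascPochhammer_pos n b hb).ne'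
  have h3 := (ascPochhammer_pos n c hc).ne'
  have h4 : ((Nat.factorial n : ℝ)) ≠ 0 := by positivity
  have h5 : (c + n) ≠ 0 := by positivity
  have h6 : ((n:ℝ) + 1) ≠ 0 := by positivity
  simp only [co, ascPochhammer_succ_eval, Nat.factorial_succ, Nat.cast_mul,
    Nat.cast_add, Nat.cast_one]
  field_simp

lemma co_summable {a b c : ℝ} (ha : 0 < a) (hb : 0 < b) (hc : 0 < c) {x : ℝ}
    (hx0 : 0 < x) (hx1 : x < 1)
    (hstep : ∀ᶠ n : ℕ in atTop, (a + n) * (b + n) ≤ (c + n) * ((n:ℝ) + 1)) :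
    Summable (fun n => co a b c n * x ^ n) := by
  apply summable_of_ratio_norm_eventually_le hx1
  filter_upwards [hstep] with n hq
  have hcon := co_pos ha hb hc n
  have hcon1 := co_pos ha hb hc (n+1)
  rw [Real.norm_of_nonneg (by positivity), Real.norm_of_nonneg (by positivity),
    co_succ ha hb hc n]
  have hd : (0:ℝ) < (c + n) * ((n:ℝ)+1) := by positivity
  have : (a + n) * (b + n) / ((c + n) * ((n:ℝ) + 1)) ≤ 1 := by
    rw [div_le_one hd]; exact hq
  push_cast
  calc co a b c n * ((a + ↑n) * (b + ↑n) / ((c + ↑n) * (↑n + 1))) * x ^ (n+1)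
      ≤ co a b c n * 1 * x ^ (n+1) := by
        apply mul_le_mul_of_nonneg_right _ (by positivity)
        exact mul_le_mul_of_nonneg_left this hcon.le
    _ = x * (co a b c n * x ^ n) := by ring

lemma co_summable_u {a b : ℝ} (ha : 0 < a) (hb : 0 < b) {x : ℝ}
    (hx0 : 0 < x) (hx1 : x < 1) :
    Summable (fun n => co a b (a + b) n * x ^ n) := by
  refine co_summable ha hb (by linarith) hx0 hx1 ?_
  filter_upwards [eventually_ge_atTop ⌈a * b⌉₊] with n hn
  have : a * b ≤ (n:ℝ) := le_trans (Nat.le_ceil _) (by exact_mod_cast hn)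
  nlinarith

lemma co_summable_v {x : ℝ} (hx0 : 0 < x) (hx1 : x < 1) :
    Summable (fun n => co (1/3) (2/3) 1 n * x ^ n) := by
  refine co_summable (by norm_num) (by norm_num) one_pos hx0 hx1 ?_
  filter_upwards [eventually_ge_atTop 0] with n _
  have : (0:ℝ) ≤ (n:ℝ) := Nat.cast_nonneg n
  nlinarith


section Main

variable {a b : ℝ} (ha : 0 < a) (hb : 0 < b)
  (h1 : 2/9 ≤ a * b) (h2 : 0 ≤ a * b - (2/9) * (a + b))

/-- numerator coefficients -/
noncomputable def u (a b : ℝ) (n : ℕ) : ℝ := co a b (a + b) n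
/-- denominator coefficients -/
noncomputable def v (n : ℕ) : ℝ := co (1/3) (2/3) 1 n

include ha hb in
lemma u_pos (n : ℕ) : 0 < u a b n := co_pos ha hb (by linarith) n

lemma v_pos (n : ℕ) : 0 < v n := co_pos (by norm_num) (by norm_num) one_pos n

include ha hb h1 h2 in
lemma cross_succ (n : ℕ) : u a b n * v (n + 1) ≤ u a b (n + 1) * v n := by
  have hab : (0:ℝ) < a + b := by linarith
  rw [u, u, v, v, co_succ ha hb hab n, co_succ (by norm_num) (by norm_num) one_pos n]
  have hu := co_pos ha hb hab n
  have hv := co_pos (show (0:ℝ) < 1/3 by norm_num) (show (0:ℝ) < 2/3 by norm_num) one_pos n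
  rw [show co a b (a+b) n * ((a + ↑n) * (b + ↑n) / ((a + b + ↑n) * (↑n + 1))) * co (1/3) (2/3) 1 n
      = co a b (a+b) n * co (1/3) (2/3) 1 n * ((a + ↑n) * (b + ↑n) / ((a + b + ↑n) * (↑n + 1))) by ring,
    show co a b (a+b) n * (co (1/3) (2/3) 1 n * ((1/3 + ↑n) * (2/3 + ↑n) / ((1 + ↑n) * (↑n + 1))))
      = co a b (a+b) n * co (1/3) (2/3) 1 n * ((1/3 + ↑n) * (2/3 + ↑n) / ((1 + ↑n) * (↑n + 1))) by ring]
  apply mul_le_mul_of_nonneg_left _ (by positivity)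
  have hn0 : (0:ℝ) ≤ (n:ℝ) := Nat.cast_nonneg n
  rw [div_le_div_iff₀ (by positivity) (by positivity)]
  nlinarith [mul_nonneg (sub_nonneg.mpr h1) hn0]

include ha hb h1 h2 in
lemma cross_mono {n m : ℕ} (hnm : n ≤ m) : u a b n * v m ≤ u a b m * v n := by
  induction m with
  | zero => simp_all
  | succ m ih =>
    rcases Nat.lt_or_ge n (m+1) with h | h
    · have hnm' : n ≤ m := Nat.lt_succ_iff.mp h
      have h0 := ih hnm'
      have hs := cross_succ ha hb h1 h2 m
      -- u n / v n ≤ u m / v m ≤ u (m+1) / v (m+1)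
      have hvn := v_pos n
      have hvm := v_pos m
      have hvm1 := v_pos (m+1)
      have hum := u_pos ha hb m
      rw [← div_le_div_iff₀ hvn hvm] at h0
      rw [← div_le_div_iff₀ hvm hvm1] at hs
      rw [← div_le_div_iff₀ hvn hvm1]
      exact le_trans h0 hs
    · have : n = m + 1 := le_antisymm hnm h
      subst this; exact le_refl _

include ha hb h1 h2 in
lemma cross_strict (hne : (a, b) ∉ ({(1/3, 2/3), (2/3, 1/3)} : Set (ℝ × ℝ))) :
    u a b 1 * v 2 < u a b 2 * v 1 := by
  have hkey : 0 < (a * b - 2/9) + (a * b - (2/9) * (a + b)) := by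
    rcases lt_or_eq_of_le h1 with h | h
    · linarith
    rcases lt_or_eq_of_le h2 with h' | h'
    · linarith
    · exfalso
      have hab : a * b = 2/9 := h.symm
      have hsum : a + b = 1 := by
        have := h'.symm
        nlinarith
      have : (3*a - 1) * (3*a - 2) = 0 := by nlinarith
      apply hne
      simp only [Set.mem_insert_iff, Set.mem_singleton_iff, Prod.mk.injEq]
      rcases mul_eq_zero.mp this with h3 | h3
      · left; constructor <;> linarith
      · right; constructor <;> linarith
  have hab : (0:ℝ) < a + b := by linarith
  rw [u, u, v, v, co_succ ha hb hab 1, co_succ (by norm_num) (by norm_num) one_pos 1]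
  have hu := co_pos ha hb hab 1
  have hv := co_pos (show (0:ℝ) < 1/3 by norm_num) (show (0:ℝ) < 2/3 by norm_num) one_pos 1
  rw [show co a b (a+b) 1 * ((a + (1:ℕ)) * (b + (1:ℕ)) / ((a + b + (1:ℕ)) * ((1:ℕ) + 1))) * co (1/3) (2/3) 1 1
      = co a b (a+b) 1 * co (1/3) (2/3) 1 1 * ((a + 1) * (b + 1) / ((a + b + 1) * 2)) by push_cast; ring,
    show co a b (a+b) 1 * (co (1/3) (2/3) 1 1 * ((1/3 + (1:ℕ)) * (2/3 + (1:ℕ)) / ((1 + (1:ℕ)) * ((1:ℕ) + 1))))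
      = co a b (a+b) 1 * co (1/3) (2/3) 1 1 * ((1/3 + 1) * (2/3 + 1) / (2 * 2)) by push_cast; ring]
  apply mul_lt_mul_of_pos_left _ (by positivity)
  rw [div_lt_div_iff₀ (by norm_num) (by positivity)]
  nlinarith

lemma norm_summable {f : ℕ → ℝ} (h : Summable f) (hn : ∀ n, 0 ≤ f n) :
    Summable (fun n => ‖f n‖) :=
  (summable_congr fun n => Real.norm_of_nonneg (hn n)).mpr h

lemma pow_cross {x y : ℝ} (hx : 0 < x) (hxy : x ≤ y) {n m : ℕ} (h : m ≤ n) :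
    x ^ n * y ^ m ≤ y ^ n * x ^ m := by
  obtain ⟨k, rfl⟩ := Nat.exists_eq_add_of_le h
  have hy : 0 < y := lt_of_lt_of_le hx hxy
  calc x ^ (m + k) * y ^ m = (x * y) ^ m * x ^ k := by rw [mul_pow]; ring
    _ ≤ (x * y) ^ m * y ^ k := by
        exact mul_le_mul_of_nonneg_left (pow_le_pow_left₀ hx.le hxy k) (by positivity)
    _ = y ^ (m + k) * x ^ m := by rw [mul_pow]; ring

set_option maxHeartbeats 2000000 in
include ha hb h1 h2 in
lemma key_ineq (hne : (a, b) ∉ ({(1/3, 2/3), (2/3, 1/3)} : Set (ℝ × ℝ)))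
    {x y : ℝ} (hx0 : 0 < x) (hxy : x < y) (hy1 : y < 1) :
    hyperF a b (a + b) x * hyperF (1/3) (2/3) 1 y <
      hyperF a b (a + b) y * hyperF (1/3) (2/3) 1 x := by
  have hy0 : 0 < y := lt_trans hx0 hxy
  have hx1 : x < 1 := lt_trans hxy hy1
  have hux : Summable (fun n => u a b n * x ^ n) := co_summable_u ha hb hx0 hx1
  have huy : Summable (fun n => u a b n * y ^ n) := co_summable_u ha hb hy0 hy1
  have hvx : Summable (fun n => v n * x ^ n) := co_summable_v hx0 hx1
  have hvy : Summable (fun n => v n * y ^ n) := co_summable_v hy0 hy1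
  have huxn := norm_summable hux fun n => (mul_pos (u_pos ha hb n) (pow_pos hx0 n)).le
  have huyn := norm_summable huy fun n => (mul_pos (u_pos ha hb n) (pow_pos hy0 n)).le
  have hvxn := norm_summable hvx fun n => (mul_pos (v_pos n) (pow_pos hx0 n)).le
  have hvyn := norm_summable hvy fun n => (mul_pos (v_pos n) (pow_pos hy0 n)).le
  have hP1 : Summable (fun p : ℕ × ℕ => (u a b p.1 * y ^ p.1) * (v p.2 * x ^ p.2)) :=
    summable_mul_of_summable_norm huyn hvxn
  have hP2 : Summable (fun p : ℕ × ℕ => (u a b p.1 * x ^ p.1) * (v p.2 * y ^ p.2)) :=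
    summable_mul_of_summable_norm huxn hvyn
  set T : ℕ × ℕ → ℝ := fun p =>
    (u a b p.1 * y ^ p.1) * (v p.2 * x ^ p.2) - (u a b p.1 * x ^ p.1) * (v p.2 * y ^ p.2)
    with hTdef
  have hT : Summable T := hP1.sub hP2
  have hTs : Summable (fun p : ℕ × ℕ => T p.swap) :=
    ((Equiv.prodComm ℕ ℕ).summable_iff).mpr hT
  have hswap : ∑' p : ℕ × ℕ, T p.swap = ∑' p, T p :=
    (Equiv.prodComm ℕ ℕ).tsum_eq T
  set S : ℕ × ℕ → ℝ := fun p => T p + T p.swap with hSdef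
  have hS : Summable S := hT.add hTs
  have hSform : ∀ p : ℕ × ℕ, S p =
      (u a b p.1 * v p.2 - u a b p.2 * v p.1) * (y ^ p.1 * x ^ p.2 - x ^ p.1 * y ^ p.2) := by
    intro p; simp only [hSdef, hTdef, Prod.fst_swap, Prod.snd_swap]; ring
  have hSnn : ∀ p : ℕ × ℕ, 0 ≤ S p := by
    intro ⟨n, m⟩
    rw [hSform]
    rcases le_total n m with h | h
    · have hA : u a b n * v m - u a b m * v n ≤ 0 := by
        simp only [sub_nonpos]; exact cross_mono ha hb h1 h2 h
      have hB : y ^ n * x ^ m - x ^ n * y ^ m ≤ 0 := by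
        have := pow_cross hx0 hxy.le h
        simp only [sub_nonpos]; linarith
      nlinarith [mul_nonneg (neg_nonneg.mpr hA) (neg_nonneg.mpr hB)]
    · apply mul_nonneg
      · simp only [sub_nonneg]; exact cross_mono ha hb h1 h2 h
      · simp only [sub_nonneg]
        have := pow_cross hx0 hxy.le h
        linarith [this]
  have hSpos : 0 < S (2, 1) := by
    rw [hSform]
    apply mul_pos
    · simp only [sub_pos]; exact cross_strict ha hb h1 h2 hne
    · have : y ^ 2 * x ^ 1 - x ^ 2 * y ^ 1 = x * y * (y - x) := by ring
      rw [this]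
      exact mul_pos (mul_pos hx0 hy0) (sub_pos.mpr hxy)
  have hSsum : 0 < ∑' p, S p := Summable.tsum_pos hS hSnn (2, 1) hSpos
  have hTpos : 0 < ∑' p, T p := by
    have : ∑' p, S p = ∑' p, T p + ∑' p : ℕ × ℕ, T p.swap := Summable.tsum_add hT hTs
    rw [this, hswap] at hSsum
    linarith
  have hE1 : hyperF a b (a + b) y * hyperF (1/3) (2/3) 1 x =
      ∑' p : ℕ × ℕ, (u a b p.1 * y ^ p.1) * (v p.2 * x ^ p.2) := by
    rw [hyperF_eq, hyperF_eq]
    exact tsum_mul_tsum_of_summable_norm huyn hvxn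
  have hE2 : hyperF a b (a + b) x * hyperF (1/3) (2/3) 1 y =
      ∑' p : ℕ × ℕ, (u a b p.1 * x ^ p.1) * (v p.2 * y ^ p.2) := by
    rw [hyperF_eq, hyperF_eq]
    exact tsum_mul_tsum_of_summable_norm huxn hvyn
  have hD : ∑' p, T p = hyperF a b (a + b) y * hyperF (1/3) (2/3) 1 x -
      hyperF a b (a + b) x * hyperF (1/3) (2/3) 1 y := by
    rw [hE1, hE2, ← Summable.tsum_sub hP1 hP2]
  rw [hD] at hTpos
  linarith

lemma denom_pos {x : ℝ} (hx0 : 0 < x) (hx1 : x < 1) : 0 < hyperF (1/3) (2/3) 1 x := by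
  rw [hyperF_eq]
  exact Summable.tsum_pos (co_summable_v hx0 hx1)
    (fun n => (mul_pos (v_pos n) (pow_pos hx0 n)).le) 0
    (mul_pos (v_pos 0) (pow_pos hx0 0))

end Main


end Stmt8Aux

theorem stmt_8 (a b : ℝ) (ha : 0 < a) (hb : 0 < b)
    (h1 : 2/9 ≤ a * b) (h2 : 0 ≤ a * b - (2/9) * (a + b))
    (hne : (a, b) ∉ ({(1/3, 2/3), (2/3, 1/3)} : Set (ℝ × ℝ))) :
    StrictMonoOn (fun r => hyperF a b (a + b) r / hyperF (1/3) (2/3) 1 r)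
      (Set.Ioo (0:ℝ) 1) := by
  intro x hx y hy hxy
  obtain ⟨hx0, hx1⟩ := hx
  obtain ⟨hy0, hy1⟩ := hy
  simp only
  have hgx := Stmt8Aux.denom_pos hx0 hx1
  have hgy := Stmt8Aux.denom_pos hy0 hy1
  rw [div_lt_div_iff₀ hgx hgy]
  exact Stmt8Aux.key_ineq ha hb h1 h2 hne hx0 hxy hy1
end

section
/- Let a,b > 0 with a+b ≤ 1 and ab - (2/9)(a+b) ≤ 0, (a,b) ∉ {(1/3,2/3),(2/3,1/3)}. Then the function r ↦ F(a,b;a+b+1;r)/F(1/3,2/3;2;r) is strictly decreasing on (0,1). -/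
namespace Stmt9Aux

noncomputable def K (a b c : ℝ) (n : ℕ) : ℝ :=
  (ascPochhammer ℝ n).eval a * (ascPochhammer ℝ n).eval b /
    ((ascPochhammer ℝ n).eval c * (Nat.factorial n : ℝ))

lemma hyperF_eq (a b c x : ℝ) : hyperF a b c x = ∑' n : ℕ, K a b c n * x ^ n := rfl

lemma K_zero (a b c : ℝ) : K a b c 0 = 1 := by simp [K]

lemma K_one (a b c : ℝ) : K a b c 1 = a * b / c := by
  simp [K, ascPochhammer_one]

lemma K_pos {a b c : ℝ} (ha : 0 < a) (hb : 0 < b) (hc : 0 < c) (n : ℕ) : 0 < K a b c n := by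
  unfold K
  have := ascPochhammer_pos n a ha
  have := ascPochhammer_pos n b hb
  have := ascPochhammer_pos n c hc
  have : (0:ℝ) < Nat.factorial n := by exact_mod_cast Nat.factorial_pos n
  positivity

lemma K_succ {a b c : ℝ} (ha : 0 < a) (hb : 0 < b) (hc : 0 < c) (n : ℕ) :
    K a b c (n+1) * ((c+n)*(n+1)) = K a b c n * ((a+n)*(b+n)) := by
  have pa := (ascPochhammer_pos n a ha).ne'
  have pb := (ascPochhammer_pos n b hb).ne'
  have pc := (ascPochhammer_pos n c hc).ne'
  have pf : (Nat.factorial n : ℝ) ≠ 0 := by exact_mod_cast (Nat.factorial_pos n).ne'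
  have pcn : c + n ≠ 0 := by positivity
  have pn1 : (n:ℝ) + 1 ≠ 0 := by positivity
  unfold K
  rw [ascPochhammer_succ_eval, ascPochhammer_succ_eval, ascPochhammer_succ_eval,
    Nat.factorial_succ]
  push_cast
  field_simp

lemma K_succ_le {a b c : ℝ} (ha : 0 < a) (hb : 0 < b) (hc : 0 < c)
    (h : ∀ n : ℕ, (a+n)*(b+n) ≤ (c+n)*(n+1)) (n : ℕ) : K a b c (n+1) ≤ K a b c n := by
  have hpos : (0:ℝ) < (c+n)*(n+1) := by positivity
  rw [← mul_le_mul_iff_of_pos_right hpos, K_succ ha hb hc]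
  exact mul_le_mul_of_nonneg_left (h n) (K_pos ha hb hc n).le

lemma K_le_one {a b c : ℝ} (ha : 0 < a) (hb : 0 < b) (hc : 0 < c)
    (h : ∀ n : ℕ, (a+n)*(b+n) ≤ (c+n)*(n+1)) (n : ℕ) : K a b c n ≤ 1 := by
  induction n with
  | zero => simp [K_zero]
  | succ n ih => exact (K_succ_le ha hb hc h n).trans ih

lemma K_summable {a b c x : ℝ} (ha : 0 < a) (hb : 0 < b) (hc : 0 < c)
    (h : ∀ n : ℕ, (a+n)*(b+n) ≤ (c+n)*(n+1)) (hx : 0 ≤ x) (hx1 : x < 1) :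
    Summable (fun n => K a b c n * x ^ n) := by
  refine Summable.of_nonneg_of_le
    (fun n => mul_nonneg (K_pos ha hb hc n).le (pow_nonneg hx n)) (fun n => ?_)
    (summable_geometric_of_lt_one hx hx1)
  calc K a b c n * x ^ n ≤ 1 * x ^ n :=
        mul_le_mul_of_nonneg_right (K_le_one ha hb hc h n) (pow_nonneg hx n)
    _ = x ^ n := one_mul _

lemma prod_summable {A B : ℕ → ℝ} {u v : ℝ}
    (hA0 : ∀ n, 0 ≤ A n * u ^ n) (hB0 : ∀ n, 0 ≤ B n * v ^ n)
    (hAu : Summable fun n => A n * u ^ n) (hBv : Summable fun n => B n * v ^ n) :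
    Summable (fun p : ℕ × ℕ => (A p.1 * u ^ p.1) * (B p.2 * v ^ p.2)) := by
  have h0 : ∀ p : ℕ × ℕ, 0 ≤ (A p.1 * u ^ p.1) * (B p.2 * v ^ p.2) :=
    fun p => mul_nonneg (hA0 _) (hB0 _)
  have h1 : ∀ m : ℕ, Summable (fun n : ℕ => (A m * u ^ m) * (B n * v ^ n)) :=
    fun m => hBv.mul_left _
  have h2 : Summable (fun m : ℕ => ∑' n : ℕ, (A m * u ^ m) * (B n * v ^ n)) :=
    (hAu.mul_right (∑' n, B n * v ^ n)).congr
      (fun m => ((hBv.tsum_mul_left (A m * u ^ m))).symm)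
  exact (summable_prod_of_nonneg h0).2 ⟨h1, h2⟩

lemma prod_tsum_eq {A B : ℕ → ℝ} {u v : ℝ}
    (hA0 : ∀ n, 0 ≤ A n * u ^ n) (hB0 : ∀ n, 0 ≤ B n * v ^ n)
    (hAu : Summable fun n => A n * u ^ n) (hBv : Summable fun n => B n * v ^ n) :
    (∑' n, A n * u ^ n) * (∑' n, B n * v ^ n)
      = ∑' p : ℕ × ℕ, (A p.1 * u ^ p.1) * (B p.2 * v ^ p.2) := by
  have h1 : ∀ m : ℕ, Summable (fun n : ℕ => (A m * u ^ m) * (B n * v ^ n)) :=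
    fun m => hBv.mul_left _
  have heq : ∑' p : ℕ × ℕ, (A p.1 * u ^ p.1) * (B p.2 * v ^ p.2)
      = ∑' (m : ℕ) (n : ℕ), (A m * u ^ m) * (B n * v ^ n) :=
    Summable.tsum_prod' (prod_summable hA0 hB0 hAu hBv) h1
  rw [heq, tsum_congr (fun m => hBv.tsum_mul_left (A m * u ^ m))]
  exact (hAu.tsum_mul_right _).symm

lemma cross_lt {A B : ℕ → ℝ} {x y : ℝ} (hx : 0 < x) (hxy : x < y)
    (hApos : ∀ n, 0 < A n) (hBpos : ∀ n, 0 < B n)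
    (hcross : ∀ m n : ℕ, m ≤ n → A n * B m ≤ A m * B n)
    (hstrict : A 1 * B 0 < A 0 * B 1)
    (hAx : Summable fun n => A n * x ^ n) (hAy : Summable fun n => A n * y ^ n)
    (hBx : Summable fun n => B n * x ^ n) (hBy : Summable fun n => B n * y ^ n) :
    (∑' n, A n * y ^ n) * (∑' n, B n * x ^ n)
      < (∑' n, A n * x ^ n) * (∑' n, B n * y ^ n) := by
  have hy : 0 < y := hx.trans hxy
  have hA0x : ∀ n, 0 ≤ A n * x ^ n := fun n => (mul_pos (hApos n) (pow_pos hx n)).le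
  have hA0y : ∀ n, 0 ≤ A n * y ^ n := fun n => (mul_pos (hApos n) (pow_pos hy n)).le
  have hB0x : ∀ n, 0 ≤ B n * x ^ n := fun n => (mul_pos (hBpos n) (pow_pos hx n)).le
  have hB0y : ∀ n, 0 ≤ B n * y ^ n := fun n => (mul_pos (hBpos n) (pow_pos hy n)).le
  set H : ℕ × ℕ → ℝ :=
    fun p => A p.1 * B p.2 * (x ^ p.1 * y ^ p.2 - y ^ p.1 * x ^ p.2) with hHdef
  have hF1 : Summable (fun p : ℕ × ℕ => (A p.1 * x ^ p.1) * (B p.2 * y ^ p.2)) :=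
    prod_summable hA0x hB0y hAx hBy
  have hF2 : Summable (fun p : ℕ × ℕ => (A p.1 * y ^ p.1) * (B p.2 * x ^ p.2)) :=
    prod_summable hA0y hB0x hAy hBx
  have hH : Summable H := (hF1.sub hF2).congr (fun p => by simp only [hHdef]; ring)
  have htsumH : ∑' p, H p
      = (∑' n, A n * x ^ n) * (∑' n, B n * y ^ n)
        - (∑' n, A n * y ^ n) * (∑' n, B n * x ^ n) := by
    rw [prod_tsum_eq hA0x hB0y hAx hBy, prod_tsum_eq hA0y hB0x hAy hBx,
      ← Summable.tsum_sub hF1 hF2]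
    exact tsum_congr (fun p => by simp only [hHdef]; ring)
  have hHs : Summable (fun p : ℕ × ℕ => H p.swap) :=
    ((Equiv.prodComm ℕ ℕ).summable_iff.2 hH)
  have htsumHs : ∑' p : ℕ × ℕ, H p.swap = ∑' p, H p :=
    (Equiv.prodComm ℕ ℕ).tsum_eq H
  set G : ℕ × ℕ → ℝ := fun p => H p + H p.swap with hGdef
  have hG : Summable G := hH.add hHs
  have hGkey : ∀ m n : ℕ, m ≤ n → 0 ≤ G (m, n) := by
    intro m n hmn
    obtain ⟨k, rfl⟩ := Nat.exists_eq_add_of_le hmn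
    have e : G (m, m + k)
        = (A m * B (m+k) - A (m+k) * B m) * (x ^ m * y ^ m * (y ^ k - x ^ k)) := by
      simp only [hGdef, hHdef, Prod.swap_prod_mk, pow_add]
      ring
    rw [e]
    have h1 : 0 ≤ A m * B (m+k) - A (m+k) * B m :=
      sub_nonneg.2 (hcross m (m+k) (Nat.le_add_right m k))
    have h2 : 0 ≤ x ^ m * y ^ m * (y ^ k - x ^ k) :=
      mul_nonneg (by positivity) (sub_nonneg.2 (pow_le_pow_left₀ hx.le hxy.le k))
    exact mul_nonneg h1 h2
  have hGnonneg : ∀ p : ℕ × ℕ, 0 ≤ G p := by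
    intro ⟨m, n⟩
    rcases le_total m n with h | h
    · exact hGkey m n h
    · have e : G (m, n) = G (n, m) := by simp only [hGdef, hHdef, Prod.swap_prod_mk]; ring
      rw [e]; exact hGkey n m h
  have hG01 : 0 < G (0, 1) := by
    have e : G (0, 1) = (A 0 * B 1 - A 1 * B 0) * (y - x) := by
      simp only [hGdef, hHdef, Prod.swap_prod_mk, pow_zero, pow_one]
      ring
    rw [e]
    exact mul_pos (sub_pos.2 hstrict) (sub_pos.2 hxy)
  have hpos : 0 < ∑' p, G p := Summable.tsum_pos hG hGnonneg (0, 1) hG01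
  have h2G : ∑' p, G p = 2 * ∑' p, H p := by
    rw [hGdef]
    rw [Summable.tsum_add hH hHs, htsumHs]; ring
  rw [h2G, htsumH] at hpos
  linarith

end Stmt9Aux


open Stmt9Aux in
theorem stmt_9 (a b : ℝ) (ha : 0 < a) (hb : 0 < b)
    (h1 : a + b ≤ 1) (h2 : a * b - (2/9) * (a + b) ≤ 0)
    (hne : (a, b) ∉ ({(1/3, 2/3), (2/3, 1/3)} : Set (ℝ × ℝ))) :
    StrictAntiOn (fun r => hyperF a b (a + b + 1) r / hyperF (1/3) (2/3) 2 r)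
      (Set.Ioo (0:ℝ) 1) := by
  have hc : (0:ℝ) < a + b + 1 := by linarith
  have hA_ratio : ∀ n : ℕ, (a+(n:ℝ))*(b+n) ≤ ((a+b+1)+n)*(n+1) := by
    intro n
    have hn : (0:ℝ) ≤ n := Nat.cast_nonneg n
    nlinarith
  have hB_ratio : ∀ n : ℕ, ((1/3:ℝ)+n)*(2/3+n) ≤ (2+n)*(n+1) := by
    intro n
    have hn : (0:ℝ) ≤ n := Nat.cast_nonneg n
    nlinarith
  have h13 : (0:ℝ) < 1/3 := by norm_num
  have h23 : (0:ℝ) < 2/3 := by norm_num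
  have h20 : (0:ℝ) < 2 := by norm_num
  set A : ℕ → ℝ := K a b (a+b+1) with hAdef
  set B : ℕ → ℝ := K (1/3) (2/3) 2 with hBdef
  have hApos : ∀ n, 0 < A n := K_pos ha hb hc
  have hBpos : ∀ n, 0 < B n := K_pos h13 h23 h20
  -- key polynomial inequality
  have hpoly : ∀ n : ℕ, (a+(n:ℝ))*(b+n)*(2+n) ≤ ((a+b+1)+n)*((1/3:ℝ)+n)*(2/3+n) := by
    intro n
    have hn : (0:ℝ) ≤ n := Nat.cast_nonneg n
    have hcoef : 0 ≤ 11/9 - (a+b) - a*b := by nlinarith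
    nlinarith [mul_nonneg hn hcoef]
  have hstep : ∀ n : ℕ, A (n+1) * B n ≤ A n * B (n+1) := by
    intro n
    have e1 := K_succ ha hb hc n
    have e2 := K_succ h13 h23 h20 n
    have hn : (0:ℝ) ≤ n := Nat.cast_nonneg n
    have hd1 : (0:ℝ) < ((a+b+1)+n)*(n+1) := by positivity
    have hd2 : (0:ℝ) < (2+n)*((n:ℝ)+1) := by positivity
    rw [← mul_le_mul_iff_of_pos_right (mul_pos hd1 hd2)]
    have key := mul_le_mul_of_nonneg_left (hpoly n)
      (mul_nonneg (mul_nonneg (hApos n).le (hBpos n).le) (by linarith : (0:ℝ) ≤ (n:ℝ)+1))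
    calc A (n+1) * B n * (((a+b+1)+n)*(n+1) * ((2+n)*((n:ℝ)+1)))
        = (A (n+1) * (((a+b+1)+n)*(n+1))) * (B n * ((2+n)*((n:ℝ)+1))) := by ring
      _ = (A n * ((a+n)*(b+n))) * (B n * ((2+n)*((n:ℝ)+1))) := by rw [e1]
      _ = A n * B n * ((n:ℝ)+1) * ((a+n)*(b+n)*(2+n)) := by ring
      _ ≤ A n * B n * ((n:ℝ)+1) * (((a+b+1)+n)*((1/3:ℝ)+n)*(2/3+n)) := key
      _ = (A n * (((a+b+1)+n)*((n:ℝ)+1))) * (B n * (((1/3:ℝ)+n)*(2/3+n))) := by ring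
      _ = (A n * (((a+b+1)+n)*((n:ℝ)+1))) * (B (n+1) * ((2+n)*((n:ℝ)+1))) := by rw [e2]
      _ = A n * B (n+1) * (((a+b+1)+n)*(n+1) * ((2+n)*((n:ℝ)+1))) := by ring
  have hanti : Antitone (fun n => A n / B n) := by
    apply antitone_nat_of_succ_le
    intro n
    exact (div_le_div_iff₀ (hBpos (n+1)) (hBpos n)).2 (hstep n)
  have hcross : ∀ m n : ℕ, m ≤ n → A n * B m ≤ A m * B n := by
    intro m n hmn
    exact (div_le_div_iff₀ (hBpos n) (hBpos m)).1 (hanti hmn)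
  have hstrict : A 1 * B 0 < A 0 * B 1 := by
    rw [hAdef, hBdef, K_zero, K_zero, K_one, K_one]
    have hB1 : (1/3:ℝ) * (2/3) / 2 = 1/9 := by norm_num
    rw [hB1, mul_one, one_mul]
    rw [div_lt_iff₀ hc]
    -- need a*b < 1/9 * (a+b+1), i.e. 9ab < a+b+1
    by_contra hcon
    push_neg at hcon
    have hs : a + b = 1 := by nlinarith
    have hp : a * b = 2/9 := by nlinarith
    have hroot : (3*a - 1) * (3*a - 2) = 0 := by nlinarith
    simp only [Set.mem_insert_iff, Set.mem_singleton_iff, Prod.mk.injEq, not_or, not_and]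
      at hne
    rcases mul_eq_zero.1 hroot with h | h
    · exact hne.1 (by linarith) (by linarith)
    · exact hne.2 (by linarith) (by linarith)
  intro x hx y hy hxy
  obtain ⟨hx0, hx1⟩ := hx
  obtain ⟨hy0, hy1⟩ := hy
  have hAx := K_summable ha hb hc hA_ratio hx0.le hx1
  have hAy := K_summable ha hb hc hA_ratio hy0.le hy1
  have hBx := K_summable h13 h23 h20 hB_ratio hx0.le hx1
  have hBy := K_summable h13 h23 h20 hB_ratio hy0.le hy1
  have hgx : 0 < ∑' n, B n * x ^ n := by
    refine Summable.tsum_pos hBx (fun n => mul_nonneg (hBpos n).le (pow_nonneg hx0.le n)) 0 ?_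
    simpa [hBdef, K_zero] using one_pos
  have hgy : 0 < ∑' n, B n * y ^ n := by
    refine Summable.tsum_pos hBy (fun n => mul_nonneg (hBpos n).le (pow_nonneg hy0.le n)) 0 ?_
    simpa [hBdef, K_zero] using one_pos
  simp only [hyperF_eq]
  rw [div_lt_div_iff₀ hgy hgx]
  exact cross_lt hx0 hxy hApos hBpos hcross hstrict hAx hAy hBx hBy
end

section
/- Let a,b > 0 with a+b ≥ 1 and ab - (2/9)(a+b) ≥ 0, (a,b) ∉ {(1/3,2/3),(2/3,1/3)}. Then the function r ↦ F(a,b;a+b+1;r)/F(1/3,2/3;2;r) is strictly increasing on (0,1). -/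
open Filter Topology

noncomputable def myCoef (a b c : ℝ) (n : ℕ) : ℝ :=
  (ascPochhammer ℝ n).eval a * (ascPochhammer ℝ n).eval b /
    ((ascPochhammer ℝ n).eval c * (Nat.factorial n : ℝ))

lemma hyperF_eq (a b c x : ℝ) : hyperF a b c x = ∑' n : ℕ, myCoef a b c n * x ^ n := rfl

lemma myCoef_pos {a b c : ℝ} (ha : 0 < a) (hb : 0 < b) (hc : 0 < c) (n : ℕ) :
    0 < myCoef a b c n :=
  div_pos (mul_pos (ascPochhammer_pos n a ha) (ascPochhammer_pos n b hb))
    (mul_pos (ascPochhammer_pos n c hc) (by exact_mod_cast Nat.factorial_pos n))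

lemma myCoef_succ {a b c : ℝ} (hc : 0 < c) (n : ℕ) :
    myCoef a b c (n + 1) = myCoef a b c n * ((a + n) * (b + n)) / ((c + n) * (n + 1)) := by
  have h1 : (ascPochhammer ℝ n).eval c ≠ 0 := (ascPochhammer_pos n c hc).ne'
  have h2 : (Nat.factorial n : ℝ) ≠ 0 := by exact_mod_cast (Nat.factorial_pos n).ne'
  have h3 : (c + n) ≠ 0 := by positivity
  have h4 : ((n : ℝ) + 1) ≠ 0 := by positivity
  simp only [myCoef, ascPochhammer_succ_eval, Nat.factorial_succ, Nat.cast_mul, Nat.cast_add,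
    Nat.cast_one]
  field_simp

lemma tendsto_aux (p q : ℝ) :
    Tendsto (fun n : ℕ => (p + n) / (q + n)) atTop (𝓝 1) := by
  have h0 : Tendsto (fun n : ℕ => (q + n : ℝ)) atTop atTop :=
    tendsto_atTop_add_const_left _ q tendsto_natCast_atTop_atTop
  have h1 : Tendsto (fun n : ℕ => (p - q) * (q + (n : ℝ))⁻¹ + 1) atTop (𝓝 1) := by
    simpa using (tendsto_const_nhds (x := p - q)).mul h0.inv_tendsto_atTop |>.add
      (tendsto_const_nhds (x := (1:ℝ)))
  refine h1.congr' ?_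
  filter_upwards [h0.eventually_gt_atTop 0] with n hn
  field_simp
  ring

lemma myCoef_summable {a b c x : ℝ} (ha : 0 < a) (hb : 0 < b) (hc : 0 < c)
    (hx0 : 0 < x) (hx1 : x < 1) :
    Summable (fun n : ℕ => myCoef a b c n * x ^ n) := by
  have hpos : ∀ n : ℕ, 0 < myCoef a b c n * x ^ n :=
    fun n => mul_pos (myCoef_pos ha hb hc n) (pow_pos hx0 n)
  apply summable_of_ratio_test_tendsto_lt_one hx1
    (Filter.Eventually.of_forall fun n => (hpos n).ne')
  have heq : ∀ n : ℕ, ‖myCoef a b c (n+1) * x ^ (n+1)‖ / ‖myCoef a b c n * x ^ n‖ =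
      x * ((a + n) / (c + n)) * ((b + n) / (1 + n)) := by
    intro n
    rw [Real.norm_eq_abs, Real.norm_eq_abs, abs_of_pos (hpos _), abs_of_pos (hpos _),
      myCoef_succ hc n]
    have h1 : myCoef a b c n ≠ 0 := (myCoef_pos ha hb hc n).ne'
    have h2 : (c + (n:ℝ)) ≠ 0 := by positivity
    have h3 : ((n:ℝ) + 1) ≠ 0 := by positivity
    have h4 : (1 + (n:ℝ)) ≠ 0 := by positivity
    have h5 : x ^ n ≠ 0 := (pow_pos hx0 n).ne'
    field_simp
    ring
  rw [show (𝓝 x) = 𝓝 (x * 1 * 1) by norm_num]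
  exact Tendsto.congr (fun n => (heq n).symm)
    (((tendsto_const_nhds (x := x)).mul (tendsto_aux a c)).mul (tendsto_aux b 1))

lemma hyperF_pos {a b c x : ℝ} (ha : 0 < a) (hb : 0 < b) (hc : 0 < c)
    (hx0 : 0 < x) (hx1 : x < 1) : 0 < hyperF a b c x := by
  rw [hyperF_eq]
  exact Summable.tsum_pos (myCoef_summable ha hb hc hx0 hx1)
    (fun n => (mul_pos (myCoef_pos ha hb hc n) (pow_pos hx0 n)).le) 0
    (mul_pos (myCoef_pos ha hb hc 0) (pow_pos hx0 0))

lemma cross_mono {a b : ℝ} (ha : 0 < a) (hb : 0 < b) (h1 : 1 ≤ a + b)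
    (h2 : 0 ≤ a * b - (2/9) * (a + b)) {k l : ℕ} (hkl : k ≤ l) :
    myCoef a b (a+b+1) k * myCoef (1/3) (2/3) 2 l ≤
      myCoef a b (a+b+1) l * myCoef (1/3) (2/3) 2 k := by
  have hc : (0:ℝ) < a + b + 1 := by linarith
  have hb2 : (0:ℝ) < (2:ℝ) := two_pos
  have hα : 0 ≤ a * b + (a + b) - 11/9 := by linarith
  have hApos : ∀ n, 0 < myCoef a b (a+b+1) n := myCoef_pos ha hb hc
  have hBpos : ∀ n, 0 < myCoef (1/3) (2/3) 2 n := myCoef_pos (by norm_num) (by norm_num) hb2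
  have step : ∀ n : ℕ, myCoef a b (a+b+1) n / myCoef (1/3) (2/3) 2 n ≤
      myCoef a b (a+b+1) (n+1) / myCoef (1/3) (2/3) 2 (n+1) := by
    intro n
    rw [div_le_div_iff₀ (hBpos n) (hBpos (n+1))]
    have hn : (0:ℝ) ≤ (n:ℝ) := Nat.cast_nonneg n
    have hD : 0 ≤ (a + n) * (b + n) * (2 + n) - (1/3 + n) * (2/3 + n) * ((a+b+1) + n) := by
      nlinarith [mul_nonneg hn hα]
    have hfrac : ((1:ℝ)/3 + n) * (2/3 + n) / ((2 + n) * (n + 1)) ≤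
        (a + n) * (b + n) / (((a+b+1) + n) * (n + 1)) := by
      rw [div_le_div_iff₀ (by positivity) (by positivity)]
      nlinarith [mul_nonneg (by positivity : (0:ℝ) ≤ (n:ℝ) + 1) hD]
    calc myCoef a b (a+b+1) n * myCoef (1/3) (2/3) 2 (n+1)
        = (myCoef a b (a+b+1) n * myCoef (1/3) (2/3) 2 n) *
            (((1:ℝ)/3 + n) * (2/3 + n) / ((2 + n) * (n + 1))) := by
          rw [myCoef_succ hb2 n]; ring
      _ ≤ (myCoef a b (a+b+1) n * myCoef (1/3) (2/3) 2 n) *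
            ((a + n) * (b + n) / (((a+b+1) + n) * (n + 1))) :=
          mul_le_mul_of_nonneg_left hfrac (mul_pos (hApos n) (hBpos n)).le
      _ = myCoef a b (a+b+1) (n+1) * myCoef (1/3) (2/3) 2 n := by
          rw [myCoef_succ hc n]; ring
  have mono : Monotone (fun n => myCoef a b (a+b+1) n / myCoef (1/3) (2/3) 2 n) :=
    monotone_nat_of_le_succ step
  exact (div_le_div_iff₀ (hBpos k) (hBpos l)).mp (mono hkl)

lemma cross_strict {a b : ℝ} (ha : 0 < a) (hb : 0 < b) (h1 : 1 ≤ a + b)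
    (h2 : 0 ≤ a * b - (2/9) * (a + b))
    (hne : (a, b) ∉ ({(1/3, 2/3), (2/3, 1/3)} : Set (ℝ × ℝ))) :
    myCoef a b (a+b+1) 1 * myCoef (1/3) (2/3) 2 2 <
      myCoef a b (a+b+1) 2 * myCoef (1/3) (2/3) 2 1 := by
  simp only [Set.mem_insert_iff, Set.mem_singleton_iff, Prod.mk.injEq, not_or, not_and] at hne
  have hc : (0:ℝ) < a + b + 1 := by linarith
  have hb2 : (0:ℝ) < (2:ℝ) := two_pos
  have hA1 : 0 < myCoef a b (a+b+1) 1 := myCoef_pos ha hb hc 1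
  have hB1 : 0 < myCoef (1/3) (2/3) 2 1 := myCoef_pos (by norm_num) (by norm_num) hb2 1
  have hB2 : myCoef (1/3) (2/3) 2 2 = myCoef (1/3) (2/3) 2 1 * (10/27) := by
    rw [myCoef_succ hb2 1]; norm_num; ring
  have hA2 : myCoef a b (a+b+1) 2 =
      myCoef a b (a+b+1) 1 * ((a + 1) * (b + 1)) / ((a + b + 2) * 2) := by
    rw [myCoef_succ hc 1]; norm_num; ring_nf
  have hstrict : (10:ℝ)/27 < (a + 1) * (b + 1) / ((a + b + 2) * 2) := by
    rw [lt_div_iff₀ (by positivity)]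
    by_contra hle
    push_neg at hle
    have hs : a + b = 1 := by nlinarith
    have hp : a * b = 2/9 := by nlinarith
    have hz : (3*a - 1) * (3*a - 2) = 0 := by linear_combination (9*a) * hs - 9 * hp
    rcases mul_eq_zero.mp hz with h | h
    · exact hne.1 (by linarith) (by linarith)
    · exact hne.2 (by linarith) (by linarith)
  calc myCoef a b (a+b+1) 1 * myCoef (1/3) (2/3) 2 2
      = (myCoef a b (a+b+1) 1 * myCoef (1/3) (2/3) 2 1) * (10/27) := by rw [hB2]; ring
    _ < (myCoef a b (a+b+1) 1 * myCoef (1/3) (2/3) 2 1) *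
          ((a + 1) * (b + 1) / ((a + b + 2) * 2)) :=
        mul_lt_mul_of_pos_left hstrict (mul_pos hA1 hB1)
    _ = myCoef a b (a+b+1) 2 * myCoef (1/3) (2/3) 2 1 := by rw [hA2]; ring

lemma pow_cross {x y : ℝ} (hx : 0 < x) (hxy : x < y) {k l : ℕ} (hkl : k ≤ l) :
    x ^ l * y ^ k ≤ x ^ k * y ^ l := by
  obtain ⟨d, rfl⟩ := Nat.exists_eq_add_of_le hkl
  have hy : 0 < y := hx.trans hxy
  rw [pow_add, pow_add]
  nlinarith [mul_le_mul_of_nonneg_left (pow_le_pow_left₀ hx.le hxy.le d)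
    (show (0:ℝ) ≤ x ^ k * y ^ k by positivity)]

set_option maxHeartbeats 1000000 in
lemma main_ineq {a b : ℝ} (ha : 0 < a) (hb : 0 < b) (h1 : 1 ≤ a + b)
    (h2 : 0 ≤ a * b - (2/9) * (a + b))
    (hne : (a, b) ∉ ({(1/3, 2/3), (2/3, 1/3)} : Set (ℝ × ℝ)))
    {x y : ℝ} (hx0 : 0 < x) (hxy : x < y) (hy1 : y < 1) :
    hyperF a b (a+b+1) x * hyperF (1/3) (2/3) 2 y <
      hyperF a b (a+b+1) y * hyperF (1/3) (2/3) 2 x := by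
  have hc : (0:ℝ) < a + b + 1 := by linarith
  have hb2 : (0:ℝ) < (2:ℝ) := two_pos
  have h3 : (0:ℝ) < 1/3 := by norm_num
  have h23 : (0:ℝ) < 2/3 := by norm_num
  have hy0 : 0 < y := hx0.trans hxy
  have hx1 : x < 1 := hxy.trans hy1
  set A : ℕ → ℝ := myCoef a b (a+b+1) with hA
  set B : ℕ → ℝ := myCoef (1/3) (2/3) 2 with hBdef
  have hApos : ∀ n, 0 < A n := myCoef_pos ha hb hc
  have hBpos : ∀ n, 0 < B n := myCoef_pos h3 h23 hb2
  have SfX : Summable (fun n : ℕ => A n * x ^ n) := myCoef_summable ha hb hc hx0 hx1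
  have SfY : Summable (fun n : ℕ => A n * y ^ n) := myCoef_summable ha hb hc hy0 hy1
  have SgX : Summable (fun n : ℕ => B n * x ^ n) := myCoef_summable h3 h23 hb2 hx0 hx1
  have SgY : Summable (fun n : ℕ => B n * y ^ n) := myCoef_summable h3 h23 hb2 hy0 hy1
  have SF : Summable (fun p : ℕ × ℕ => (A p.1 * x ^ p.1) * (B p.2 * y ^ p.2)) :=
    SfX.mul_of_nonneg SgY (fun n => (mul_pos (hApos n) (pow_pos hx0 n)).le)
      (fun n => (mul_pos (hBpos n) (pow_pos hy0 n)).le)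
  have SF' : Summable (fun p : ℕ × ℕ => (A p.1 * y ^ p.1) * (B p.2 * x ^ p.2)) :=
    SfY.mul_of_nonneg SgX (fun n => (mul_pos (hApos n) (pow_pos hy0 n)).le)
      (fun n => (mul_pos (hBpos n) (pow_pos hx0 n)).le)
  set D : ℕ × ℕ → ℝ :=
    fun p => (A p.1 * x ^ p.1) * (B p.2 * y ^ p.2) - (A p.1 * y ^ p.1) * (B p.2 * x ^ p.2)
    with hD
  have SD : Summable D := SF.sub SF'
  have SDswap : Summable (fun p : ℕ × ℕ => D p.swap) :=
    (Equiv.prodComm ℕ ℕ).summable_iff.mpr SD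
  have hswap : ∑' p : ℕ × ℕ, D p.swap = ∑' p, D p := (Equiv.prodComm ℕ ℕ).tsum_eq D
  set G : ℕ × ℕ → ℝ := fun p => (D p + D p.swap) / 2 with hG
  have SG : Summable G := (SD.add SDswap).div_const 2
  have hGfact : ∀ k l : ℕ, G (k, l) =
      (A k * B l - A l * B k) * (x ^ k * y ^ l - x ^ l * y ^ k) / 2 := by
    intro k l
    simp only [hG, hD, Prod.swap_prod_mk]
    ring
  have hGle : ∀ p : ℕ × ℕ, G p ≤ 0 := by
    rintro ⟨k, l⟩
    rw [hGfact k l]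
    rcases le_total k l with hkl | hlk
    · apply div_nonpos_of_nonpos_of_nonneg _ (by norm_num)
      apply mul_nonpos_of_nonpos_of_nonneg
      · exact sub_nonpos.mpr (cross_mono ha hb h1 h2 hkl)
      · exact sub_nonneg.mpr (pow_cross hx0 hxy hkl)
    · apply div_nonpos_of_nonpos_of_nonneg _ (by norm_num)
      apply mul_nonpos_of_nonneg_of_nonpos
      · exact sub_nonneg.mpr (cross_mono ha hb h1 h2 hlk)
      · exact sub_nonpos.mpr (pow_cross hx0 hxy hlk)
  have hGlt : G (1, 2) < 0 := by
    rw [hGfact 1 2]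
    apply div_neg_of_neg_of_pos _ two_pos
    apply mul_neg_of_neg_of_pos
    · exact sub_neg.mpr (cross_strict ha hb h1 h2 hne)
    · have : x ^ 2 * y ^ 1 < x ^ 1 * y ^ 2 := by nlinarith [mul_pos (mul_pos hx0 hy0) (sub_pos.mpr hxy)]
      linarith
  have hsum_neg : ∑' p, D p < 0 := by
    have h0 : ∑' p : ℕ × ℕ, G p < ∑' _ : ℕ × ℕ, (0:ℝ) :=
      Summable.tsum_lt_tsum hGle hGlt SG summable_zero
    rw [tsum_zero] at h0
    have hGD : ∑' p, G p = ∑' p, D p := by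
      simp only [hG]
      rw [tsum_div_const, Summable.tsum_add SD SDswap, hswap]
      ring
    rw [hGD] at h0
    exact h0
  have hfx : hyperF a b (a+b+1) x * hyperF (1/3) (2/3) 2 y =
      ∑' p : ℕ × ℕ, (A p.1 * x ^ p.1) * (B p.2 * y ^ p.2) := by
    rw [hyperF_eq, hyperF_eq]
    exact Summable.tsum_mul_tsum SfX SgY SF
  have hfy : hyperF a b (a+b+1) y * hyperF (1/3) (2/3) 2 x =
      ∑' p : ℕ × ℕ, (A p.1 * y ^ p.1) * (B p.2 * x ^ p.2) := by
    rw [hyperF_eq, hyperF_eq]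
    exact Summable.tsum_mul_tsum SfY SgX SF'
  have hsub : ∑' p, D p =
      (∑' p : ℕ × ℕ, (A p.1 * x ^ p.1) * (B p.2 * y ^ p.2)) -
        ∑' p : ℕ × ℕ, (A p.1 * y ^ p.1) * (B p.2 * x ^ p.2) := by
    simp only [hD]
    exact Summable.tsum_sub SF SF'
  rw [hsub] at hsum_neg
  rw [hfx, hfy]
  linarith

theorem stmt_10 (a b : ℝ) (ha : 0 < a) (hb : 0 < b)
    (h1 : 1 ≤ a + b) (h2 : 0 ≤ a * b - (2/9) * (a + b))
    (hne : (a, b) ∉ ({(1/3, 2/3), (2/3, 1/3)} : Set (ℝ × ℝ))) :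
    StrictMonoOn (fun r => hyperF a b (a + b + 1) r / hyperF (1/3) (2/3) 2 r)
      (Set.Ioo (0:ℝ) 1) := by
  intro x hx y hy hxy
  have h3 : (0:ℝ) < 1/3 := by norm_num
  have h23 : (0:ℝ) < 2/3 := by norm_num
  have hgx : 0 < hyperF (1/3) (2/3) 2 x := hyperF_pos h3 h23 two_pos hx.1 hx.2
  have hgy : 0 < hyperF (1/3) (2/3) 2 y := hyperF_pos h3 h23 two_pos hy.1 hy.2
  simp only
  rw [div_lt_div_iff₀ hgx hgy]
  exact main_ineq ha hb h1 h2 hne hx.1 hxy hy.2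
end
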